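/- Let ε > 0, ℓ > 0, x₀ ∈ [−ℓ,ℓ], and let U : [−ℓ,ℓ] → ℝ be twice continuously differentiable. Define ρ(x) = exp( −(1/ε) ∫_{x₀}^{x} U(y)(1 + U'(y)²)^{3/2} dy ), p(x) = ε/(1 + U'(x)²)^{3/2}, q(x) = −3ε U''(x) U'(x)/(1 + U'(x)²)^{5/2} − U(x), and r(x) = −U'(x). Then the function v := 1/ρ satisfies p(x) v''(x) + q(x) v'(x) + r(x) v(x) = 0 for every x ∈ [−ℓ,ℓ]. -/

import Mathlib

open Real MeasureTheory Set intervalIntegral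

/-- the function `v := 1/ρ`, with
`ρ(x) = exp(−(1/ε) ∫_{x₀}^x U (1+(U')²)^{3/2})`, satisfies the linearized equation
`p v'' + q v' + r v = 0` on `[−ℓ,ℓ]`. -/
theorem inv_weight_in_kernel
    (ε ℓ x₀ : ℝ) (hε : 0 < ε) (hℓ : 0 < ℓ) (hx₀ : x₀ ∈ Set.Icc (-ℓ) ℓ)
    (U U' U'' : ℝ → ℝ)
    (hU : ∀ x ∈ Set.Icc (-ℓ) ℓ, HasDerivWithinAt U (U' x) (Set.Icc (-ℓ) ℓ) x)
    (hU' : ∀ x ∈ Set.Icc (-ℓ) ℓ, HasDerivWithinAt U' (U'' x) (Set.Icc (-ℓ) ℓ) x)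
    (hU''c : ContinuousOn U'' (Set.Icc (-ℓ) ℓ))
    (ρ p q r : ℝ → ℝ)
    (hρ : ∀ x, ρ x = Real.exp (-(1/ε) *
      ∫ y in x₀..x, U y * (1 + (U' y) ^ 2) ^ ((3:ℝ)/2)))
    (hp : ∀ x, p x = ε / (1 + (U' x) ^ 2) ^ ((3:ℝ)/2))
    (hq : ∀ x, q x = -(3 * ε) * U'' x * U' x / (1 + (U' x) ^ 2) ^ ((5:ℝ)/2) - U x)
    (hr : ∀ x, r x = -U' x) :
    ∃ w' w'' : ℝ → ℝ,
      (∀ x ∈ Set.Icc (-ℓ) ℓ,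
        HasDerivWithinAt (fun y => (ρ y)⁻¹) (w' x) (Set.Icc (-ℓ) ℓ) x) ∧
      (∀ x ∈ Set.Icc (-ℓ) ℓ, HasDerivWithinAt w' (w'' x) (Set.Icc (-ℓ) ℓ) x) ∧
      (∀ x ∈ Set.Icc (-ℓ) ℓ,
        p x * w'' x + q x * w' x + r x * (ρ x)⁻¹ = 0) := by
  set I : Set ℝ := Set.Icc (-ℓ) ℓ with hIdef
  set g : ℝ → ℝ := fun y => U y * (1 + (U' y) ^ 2) ^ ((3:ℝ)/2) with hgdef
  set g' : ℝ → ℝ := fun x => U' x * (1 + (U' x) ^ 2) ^ ((3:ℝ)/2) +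
      U x * (((3:ℝ)/2) * (1 + (U' x) ^ 2) ^ ((1:ℝ)/2) * (2 * U' x * U'' x)) with hg'def
  set F : ℝ → ℝ := fun x => ∫ y in x₀..x, g y with hFdef
  set E : ℝ → ℝ := fun x => Real.exp (ε⁻¹ * F x) with hEdef
  -- positivity of 1 + (U')²
  have hApos : ∀ x, (0:ℝ) < 1 + (U' x) ^ 2 := fun x => by positivity
  -- continuity
  have hUc : ContinuousOn U I := fun x hx => (hU x hx).continuousWithinAt
  have hU'c : ContinuousOn U' I := fun x hx => (hU' x hx).continuousWithinAt
  have hgc : ContinuousOn g I := by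
    apply hUc.mul
    apply ContinuousOn.rpow_const (continuousOn_const.add (hU'c.pow 2))
    intro x _; exact Or.inl (hApos x).ne'
  -- the inverse of ρ equals E
  have hvE : ∀ x, (ρ x)⁻¹ = E x := by
    intro x
    rw [hρ x, ← Real.exp_neg]
    congr 1
    simp only [hEdef, hFdef]
    ring
  -- FTC: F has derivative g within I
  have hFderiv : ∀ x ∈ I, HasDerivWithinAt F (g x) I x := by
    intro x hx
    haveI : Fact (x ∈ Set.Icc (-ℓ) ℓ) := ⟨hx⟩
    have hint : IntervalIntegrable g volume x₀ x := by
      apply ContinuousOn.intervalIntegrable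
      apply hgc.mono
      exact Set.uIcc_subset_Icc hx₀ hx
    have hmeas : StronglyMeasurableAtFilter g (nhdsWithin x I) volume :=
      ⟨I, self_mem_nhdsWithin, hgc.aestronglyMeasurable measurableSet_Icc⟩
    exact intervalIntegral.integral_hasDerivWithinAt_right hint hmeas (hgc x hx)
  -- derivative of E within I
  have hEderiv : ∀ x ∈ I, HasDerivWithinAt E (ε⁻¹ * g x * E x) I x := by
    intro x hx
    have h1 : HasDerivWithinAt (fun y => ε⁻¹ * F y) (ε⁻¹ * g x) I x :=
      (hFderiv x hx).const_mul _
    have := h1.exp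
    convert this using 1
    ring
  -- derivative of g within I
  have hgderiv : ∀ x ∈ I, HasDerivWithinAt g (g' x) I x := by
    intro x hx
    have hA : HasDerivWithinAt (fun y => 1 + (U' y) ^ 2) (2 * U' x * U'' x) I x := by
      have := ((hU' x hx).pow 2).const_add 1
      exact this.congr_deriv (by norm_num)
    have hrpow : HasDerivAt (fun t : ℝ => t ^ ((3:ℝ)/2))
        (((3:ℝ)/2) * (1 + (U' x) ^ 2) ^ ((3:ℝ)/2 - 1)) (1 + (U' x) ^ 2) :=
      Real.hasDerivAt_rpow_const (Or.inl (hApos x).ne')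
    have hA32 : HasDerivWithinAt (fun y => (1 + (U' y) ^ 2) ^ ((3:ℝ)/2))
        (((3:ℝ)/2) * (1 + (U' x) ^ 2) ^ ((1:ℝ)/2) * (2 * U' x * U'' x)) I x := by
      have := hrpow.comp_hasDerivWithinAt x hA
      exact this.congr_deriv (by norm_num)
    exact (hU x hx).mul hA32
  -- choose w' and w''
  refine ⟨fun x => ε⁻¹ * g x * E x,
    fun x => (ε⁻¹ * g' x) * E x + (ε⁻¹ * g x) * (ε⁻¹ * g x * E x), ?_, ?_, ?_⟩
  · intro x hx
    exact (hEderiv x hx).congr (fun y _ => hvE y) (hvE x)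
  · intro x hx
    exact ((hgderiv x hx).const_mul ε⁻¹).mul (hEderiv x hx)
  · intro x hx
    rw [hvE x, hp x, hq x, hr x]
    set B : ℝ := (1 + (U' x) ^ 2) ^ ((1:ℝ)/2) with hBdef
    have hBpos : 0 < B := Real.rpow_pos_of_pos (hApos x) _
    have h32 : (1 + (U' x) ^ 2) ^ ((3:ℝ)/2) = B ^ 3 := by
      rw [hBdef, ← Real.rpow_natCast ((1 + (U' x) ^ 2) ^ ((1:ℝ)/2)) 3,
        ← Real.rpow_mul (hApos x).le]
      norm_num
    have h52 : (1 + (U' x) ^ 2) ^ ((5:ℝ)/2) = B ^ 5 := by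
      rw [hBdef, ← Real.rpow_natCast ((1 + (U' x) ^ 2) ^ ((1:ℝ)/2)) 5,
        ← Real.rpow_mul (hApos x).le]
      norm_num
    have hgx : g x = U x * B ^ 3 := by rw [hgdef]; simp only [h32]
    have hg'x : g' x = U' x * B ^ 3 +
        U x * (((3:ℝ)/2) * B * (2 * U' x * U'' x)) := by
      rw [hg'def]
      simp only [h32, hBdef]
    simp only [hgx, hg'x, h32, h52]
    field_simp
    ring
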